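/- If f is μ-strongly convex-μ-strongly concave with L-Lipschitz partial gradients, then Φ(z) = (∇_x f, −∇_y f) satisfies the cocoercivity-type inequality ⟨Φ(z) − Φ(ẑ), z − ẑ⟩ ≥ (μ/(4L²))‖Φ(z) − Φ(ẑ)‖² for all z, ẑ ∈ ℝ^{m+n}. -/

import Mathlib

set_option maxHeartbeats 1000000

theorem aux_cocoercive {μ L A S D : ℝ} (hμ : 0 < μ) (hL : 0 < L)
    (hmono : μ * D ≤ S) (hlip : A ≤ 4 * L ^ 2 * D) :
    μ / (4 * L ^ 2) * A ≤ S := by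
  rw [div_mul_eq_mul_div, div_le_iff₀ (by positivity)]
  nlinarith [mul_le_mul_of_nonneg_left hlip hμ.le,
    mul_le_mul_of_nonneg_left hmono (by positivity : (0:ℝ) ≤ 4 * L ^ 2)]

/-- Lemma 9: cocoercivity-type inequality
`⟨Φ(z)−Φ(ẑ), z−ẑ⟩ ≥ (μ/(4L²))‖Φ(z)−Φ(ẑ)‖²` for strongly convex-strongly concave `f`. -/
theorem Phi_cocoercive
    {m n : ℕ}
    (f : EuclideanSpace ℝ (Fin m) → EuclideanSpace ℝ (Fin n) → ℝ)
    (gx : EuclideanSpace ℝ (Fin m) → EuclideanSpace ℝ (Fin n) → EuclideanSpace ℝ (Fin m))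
    (gy : EuclideanSpace ℝ (Fin m) → EuclideanSpace ℝ (Fin n) → EuclideanSpace ℝ (Fin n))
    (hgx : ∀ x y, HasGradientAt (fun x' => f x' y) (gx x y) x)
    (hgy : ∀ x y, HasGradientAt (fun y' => f x y') (gy x y) y)
    (μ L : ℝ) (hμ : 0 < μ) (hLμ : μ ≤ L)
    -- Assumption 3: μ-strong convexity in x and μ-strong concavity in y
    (hSC : ∀ x₁ x₂ y, f x₁ y + inner ℝ (gx x₁ y) (x₂ - x₁) + μ / 2 * ‖x₂ - x₁‖ ^ 2 ≤ f x₂ y)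
    (hSCC : ∀ x y₁ y₂, f x y₂ ≤ f x y₁ + inner ℝ (gy x y₁) (y₂ - y₁) - μ / 2 * ‖y₂ - y₁‖ ^ 2)
    -- Assumption 2: L-Lipschitz partial gradients
    (hLx : ∀ x₁ y₁ x₂ y₂, ‖gx x₁ y₁ - gx x₂ y₂‖ ≤ L * (‖x₁ - x₂‖ + ‖y₁ - y₂‖))
    (hLy : ∀ x₁ y₁ x₂ y₂, ‖gy x₁ y₁ - gy x₂ y₂‖ ≤ L * (‖x₁ - x₂‖ + ‖y₁ - y₂‖))
    (Φ : WithLp 2 (EuclideanSpace ℝ (Fin m) × EuclideanSpace ℝ (Fin n)) →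
         WithLp 2 (EuclideanSpace ℝ (Fin m) × EuclideanSpace ℝ (Fin n)))
    (hΦ : ∀ z, Φ z =
      (WithLp.equiv 2 (EuclideanSpace ℝ (Fin m) × EuclideanSpace ℝ (Fin n))).symm
        (gx (WithLp.equiv 2 _ z).1 (WithLp.equiv 2 _ z).2,
         -(gy (WithLp.equiv 2 _ z).1 (WithLp.equiv 2 _ z).2))) :
    ∀ z zhat,
      μ / (4 * L ^ 2) * ‖Φ z - Φ zhat‖ ^ 2 ≤ inner ℝ (Φ z - Φ zhat) (z - zhat) := by
  intro z zhat
  set x := z.fst with hx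
  set y := z.snd with hy
  set x' := zhat.fst with hx'
  set y' := zhat.snd with hy'
  have hfst : (Φ z - Φ zhat).fst = gx x y - gx x' y' := by rw [hΦ, hΦ]; rfl
  have hsnd : (Φ z - Φ zhat).snd = gy x' y' - gy x y := by
    rw [hΦ, hΦ]
    show -(gy x y) - -(gy x' y') = _
    abel
  have hzfst : (z - zhat).fst = x - x' := rfl
  have hzsnd : (z - zhat).snd = y - y' := rfl
  have hnorm : ‖Φ z - Φ zhat‖ ^ 2 = ‖gx x y - gx x' y'‖ ^ 2 + ‖gy x' y' - gy x y‖ ^ 2 := by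
    rw [WithLp.prod_norm_sq_eq_of_L2, hfst, hsnd]
  have hinner : (inner ℝ (Φ z - Φ zhat) (z - zhat) : ℝ) =
      inner ℝ (gx x y - gx x' y') (x - x') + inner ℝ (gy x' y' - gy x y) (y - y') := by
    rw [WithLp.prod_inner_apply, WithLp.ofLp_fst, WithLp.ofLp_fst, WithLp.ofLp_snd, WithLp.ofLp_snd, hfst, hsnd, hzfst, hzsnd]
  -- strong monotonicity
  have h1 := hSC x x' y
  have h2 := hSC x' x y'
  have h3 := hSCC x y y'
  have h4 := hSCC x' y' y
  have e1 : (inner ℝ (gx x y) (x' - x) : ℝ) = - inner ℝ (gx x y) (x - x') := by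
    rw [← inner_neg_right]; norm_num
  have e3 : (inner ℝ (gy x y) (y - y') : ℝ) = - inner ℝ (gy x y) (y' - y) := by
    rw [← inner_neg_right]; norm_num
  have nx : ‖x' - x‖ = ‖x - x'‖ := norm_sub_rev _ _
  have ny : ‖y' - y‖ = ‖y - y'‖ := norm_sub_rev _ _
  have hmono : μ * (‖x - x'‖ ^ 2 + ‖y - y'‖ ^ 2) ≤
      inner ℝ (gx x y - gx x' y') (x - x') + inner ℝ (gy x' y' - gy x y) (y - y') := by
    rw [inner_sub_left, inner_sub_left]
    rw [nx] at h1
    rw [ny] at h3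
    linarith [h1, h2, h3, h4, e1, e3]
  -- Lipschitz bound
  have la := hLx x y x' y'
  have lb := hLy x' y' x y
  have hL0 : 0 < L := lt_of_lt_of_le hμ hLμ
  have ha0 : (0:ℝ) ≤ ‖gx x y - gx x' y'‖ := norm_nonneg _
  have hb0 : (0:ℝ) ≤ ‖gy x' y' - gy x y‖ := norm_nonneg _
  have hlip : ‖gx x y - gx x' y'‖ ^ 2 + ‖gy x' y' - gy x y‖ ^ 2 ≤
      4 * L ^ 2 * (‖x - x'‖ ^ 2 + ‖y - y'‖ ^ 2) := by
    have nx' : ‖x' - x‖ = ‖x - x'‖ := norm_sub_rev _ _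
    have ny' : ‖y' - y‖ = ‖y - y'‖ := norm_sub_rev _ _
    rw [nx', ny'] at lb
    nlinarith [sq_nonneg (‖x - x'‖ - ‖y - y'‖), norm_nonneg (x - x'), norm_nonneg (y - y'),
      mul_nonneg hL0.le (add_nonneg (norm_nonneg (x - x')) (norm_nonneg (y - y')))]
  rw [hnorm, hinner]
  exact aux_cocoercive hμ hL0 hmono hlip
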